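/- Let I be a finite index set, and let n > 0, k > 0 and, for all i, j ∈ I, N_i > 0 and N_{ij} > 0 be real numbers. Define ℓ(M) = −Σ_{i,j∈I} [ N_{ij}·log σ(M_{ij}) + (k/n)·N_i·N_j·log σ(−M_{ij}) ] for a real matrix M = (M_{ij})_{i,j∈I}. Then ℓ attains a global minimum over all real matrices M at the unique minimizer M_{ij} = R̃_{ij} := log( n·N_{ij} / (k·N_i·N_j) ); i.e., ℓ(M) ≥ ℓ(R̃) for all M, with equality if and only if M = R̃. -/

import Mathlib

open Finset

/-- The logistic sigmoid function. -/
noncomputable def sigmoid (x : ℝ) : ℝ := 1 / (1 + Real.exp (-x))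

lemma sigmoid_pos (x : ℝ) : 0 < sigmoid x := by
  unfold sigmoid; positivity

lemma sigmoid_lt_one (x : ℝ) : sigmoid x < 1 := by
  unfold sigmoid
  rw [div_lt_one (by positivity)]
  linarith [Real.exp_pos (-x)]

lemma sigmoid_neg (x : ℝ) : sigmoid (-x) = 1 - sigmoid x := by
  unfold sigmoid
  rw [neg_neg, Real.exp_neg]
  have h := Real.exp_pos x
  field_simp
  ring

lemma sigmoid_inj {x y : ℝ} (h : sigmoid x = sigmoid y) : x = y := by
  unfold sigmoid at h
  have hx := Real.exp_pos (-x)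
  have hy := Real.exp_pos (-y)
  field_simp at h
  have h2 : Real.exp (-x) = Real.exp (-y) := by linarith
  have := Real.exp_injective h2
  linarith

lemma sigmoid_log_div {a b : ℝ} (ha : 0 < a) (hb : 0 < b) :
    sigmoid (Real.log (a / b)) = a / (a + b) := by
  unfold sigmoid
  rw [← Real.log_inv, Real.exp_log (by positivity)]
  field_simp

lemma pointwise_le {a b : ℝ} (ha : 0 < a) (hb : 0 < b) (x : ℝ) (hx : x ≠ Real.log (a / b)) :
    a * Real.log (sigmoid x) + b * Real.log (sigmoid (-x)) <
      a * Real.log (sigmoid (Real.log (a / b))) + b * Real.log (sigmoid (-(Real.log (a / b)))) := by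
  set s := Real.log (a / b) with hs
  have hab : 0 < a + b := by linarith
  have hps : sigmoid s = a / (a + b) := sigmoid_log_div ha hb
  have hpns : sigmoid (-s) = b / (a + b) := by
    rw [sigmoid_neg, hps]; field_simp; ring
  set t := sigmoid x with htdef
  have ht0 : 0 < t := sigmoid_pos x
  have ht1 : t < 1 := sigmoid_lt_one x
  have hnt : sigmoid (-x) = 1 - t := sigmoid_neg x
  have htne : t ≠ a / (a + b) := by
    intro h
    exact hx (sigmoid_inj (h.trans hps.symm))
  rw [hnt, hps, hpns]
  -- Gibbs inequality
  have h1 : Real.log (t / (a / (a + b))) < t / (a / (a + b)) - 1 :=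
    Real.log_lt_sub_one_of_pos (by positivity) (by
      intro h
      apply htne
      field_simp at h
      field_simp
      linarith)
  have h2 : Real.log ((1 - t) / (b / (a + b))) ≤ (1 - t) / (b / (a + b)) - 1 :=
    Real.log_le_sub_one_of_pos (by
      apply div_pos (by linarith) (by positivity))
  rw [Real.log_div (by positivity) (by positivity)] at h1
  rw [Real.log_div (by linarith) (by positivity)] at h2
  have e1 : t / (a / (a + b)) = t * (a + b) / a := by field_simp
  have e2 : (1 - t) / (b / (a + b)) = (1 - t) * (a + b) / b := by field_simp
  rw [e1] at h1; rw [e2] at h2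
  have k1 : a * (t * (a + b) / a) = t * (a + b) := by field_simp
  have k2 : b * ((1 - t) * (a + b) / b) = (1 - t) * (a + b) := by field_simp
  nlinarith [mul_lt_mul_of_pos_left h1 ha, mul_le_mul_of_nonneg_left h2 hb.le]

/-- The unconstrained SGNS objective attains its global minimum exactly at the
shifted product relatedness (pointwise mutual information) matrix `R̃`, and
this minimizer is unique. -/
theorem sgns_global_minimizer
    {I : Type*} [Fintype I]
    (n k : ℝ) (hn : 0 < n) (hk : 0 < k)
    (N : I → ℝ) (Nij : I → I → ℝ)
    (hN : ∀ i, 0 < N i) (hNij : ∀ i j, 0 < Nij i j)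
    (ℓ : (I → I → ℝ) → ℝ)
    (hℓ : ∀ M : I → I → ℝ, ℓ M =
      -∑ i, ∑ j, (Nij i j * Real.log (sigmoid (M i j))
        + (k / n) * N i * N j * Real.log (sigmoid (-(M i j)))))
    (R : I → I → ℝ)
    (hR : ∀ i j, R i j = Real.log (n * Nij i j / (k * N i * N j))) :
    (∀ M : I → I → ℝ, ℓ R ≤ ℓ M) ∧
      (∀ M : I → I → ℝ, ℓ M = ℓ R ↔ M = R) := by
  set F : (I → I → ℝ) → I → I → ℝ := fun M i j =>
    Nij i j * Real.log (sigmoid (M i j))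
      + (k / n) * N i * N j * Real.log (sigmoid (-(M i j))) with hF
  have hb : ∀ i j, 0 < k / n * N i * N j := by
    intro i j
    have := hN i; have := hN j
    positivity
  have hRform : ∀ i j, R i j = Real.log (Nij i j / (k / n * N i * N j)) := by
    intro i j
    rw [hR]
    congr 1
    have := (hN i).ne'; have := (hN j).ne'
    field_simp
  have key : ∀ (M : I → I → ℝ) i j, M i j ≠ R i j → F M i j < F R i j := by
    intro M i j h
    have h' : M i j ≠ Real.log (Nij i j / (k / n * N i * N j)) := by
      rw [← hRform i j]; exact h
    have hp := pointwise_le (hNij i j) (hb i j) (M i j) h'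
    simp only [hF]
    rw [hRform i j]
    exact hp
  have keyle : ∀ (M : I → I → ℝ) i j, F M i j ≤ F R i j := by
    intro M i j
    by_cases h : M i j = R i j
    · simp [hF, h]
    · exact (key M i j h).le
  have hsum : ∀ M : I → I → ℝ, ℓ M = -∑ i, ∑ j, F M i j := by
    intro M; rw [hℓ M]
  constructor
  · intro M
    rw [hsum M, hsum R]
    apply neg_le_neg
    exact Finset.sum_le_sum fun i _ => Finset.sum_le_sum fun j _ => keyle M i j
  · intro M
    constructor
    · intro h
      by_contra hne
      have : ∃ i j, M i j ≠ R i j := by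
        by_contra hc
        push_neg at hc
        exact hne (funext fun i => funext fun j => hc i j)
      obtain ⟨i0, j0, hij⟩ := this
      have hstrict : ∑ i, ∑ j, F M i j < ∑ i, ∑ j, F R i j := by
        apply Finset.sum_lt_sum (fun i _ => Finset.sum_le_sum fun j _ => keyle M i j)
        refine ⟨i0, Finset.mem_univ i0, ?_⟩
        apply Finset.sum_lt_sum (fun j _ => keyle M i0 j)
        exact ⟨j0, Finset.mem_univ j0, key M i0 j0 hij⟩
      rw [hsum M, hsum R] at h
      linarith
    · intro h; rw [h]
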